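/- Let l0, l1, a1 be positive real numbers. Define the complex numbers λ00 = e^{-(1+i)a1(l1+l0)/(l1 l0)} (l0 - l1)/(2 l0) and λ01 = e^{(1+i)a1(l1-l0)/(l1 l0)} (l1 + l0)/(2 l0). Then λ00 + λ01 ≠ 0. -/

import Mathlib

open Complex

theorem lambda_sum_ne_zero_one_jump (l0 l1 a1 : ℝ)
    (hl0 : 0 < l0) (hl1 : 0 < l1) (ha1 : 0 < a1) :
    Complex.exp (-(1 + Complex.I) * a1 * (l1 + l0) / (l1 * l0)) * ((l0 - l1) / (2 * l0))
      + Complex.exp ((1 + Complex.I) * a1 * (l1 - l0) / (l1 * l0)) * ((l1 + l0) / (2 * l0))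
      ≠ 0 := by
  intro h
  set r1 : ℝ := -(a1 * (l1 + l0) / (l1 * l0)) with hr1
  set r2 : ℝ := a1 * (l1 - l0) / (l1 * l0) with hr2
  have he1 : (-(1 + Complex.I) * a1 * (l1 + l0) / (l1 * l0)) = (r1 : ℂ) * (1 + Complex.I) := by
    rw [hr1]; push_cast; ring
  have he2 : ((1 + Complex.I) * a1 * (l1 - l0) / (l1 * l0)) = (r2 : ℂ) * (1 + Complex.I) := by
    rw [hr2]; push_cast; ring
  rw [he1, he2] at h
  have h' : Complex.exp ((r2 : ℂ) * (1 + Complex.I)) * ((l1 + l0) / (2 * l0))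
      = -(Complex.exp ((r1 : ℂ) * (1 + Complex.I)) * ((l0 - l1) / (2 * l0))) := by
    linear_combination h
  have habs := congrArg (‖·‖) h'
  have hre1 : ((r1 : ℂ) * (1 + Complex.I)).re = r1 := by simp
  have hre2 : ((r2 : ℂ) * (1 + Complex.I)).re = r2 := by simp
  rw [norm_neg, norm_mul, norm_mul, Complex.norm_exp, Complex.norm_exp, hre1, hre2] at habs
  have hc2 : ‖((l1 : ℂ) + l0) / (2 * l0)‖ = (l1 + l0) / (2 * l0) := by
    rw [show ((l1 : ℂ) + l0) / (2 * l0) = (((l1 + l0) / (2 * l0) : ℝ) : ℂ) by push_cast; ring,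
      Complex.norm_real, Real.norm_eq_abs, abs_of_pos (by positivity)]
  have hc1 : ‖((l0 : ℂ) - l1) / (2 * l0)‖ = |l0 - l1| / (2 * l0) := by
    rw [show ((l0 : ℂ) - l1) / (2 * l0) = (((l0 - l1) / (2 * l0) : ℝ) : ℂ) by push_cast; ring,
      Complex.norm_real, Real.norm_eq_abs, abs_div, abs_of_pos (show (0:ℝ) < 2 * l0 by positivity)]
  rw [hc1, hc2] at habs
  have hr12 : r1 < r2 := by
    have h1' : r1 = (-(a1 * (l1 + l0))) / (l1 * l0) := by rw [hr1]; ring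
    rw [h1', hr2, div_lt_div_iff₀ (by positivity) (by positivity)]
    nlinarith [mul_pos hl0 hl1, mul_pos ha1 hl0, mul_pos (mul_pos ha1 hl0) (mul_pos hl1 hl0)]
  have hlt : Real.exp r1 < Real.exp r2 := Real.exp_lt_exp.mpr hr12
  have h1 : |l0 - l1| < l1 + l0 := by
    rw [abs_lt]; constructor <;> nlinarith
  have hb : Real.exp r1 * (|l0 - l1| / (2 * l0)) < Real.exp r2 * ((l1 + l0) / (2 * l0)) := by
    have hdiv : |l0 - l1| / (2 * l0) < (l1 + l0) / (2 * l0) :=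
      (div_lt_div_iff_of_pos_right (by positivity)).mpr h1
    exact mul_lt_mul'' hlt hdiv (Real.exp_pos _).le (by positivity)
  linarith [habs, hb]
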